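/- Let P be a nonempty compact convex body in R^3 and (h_1,h_2,h_3) a Minkowski reduced basis of Z^3 with respect to P. Then ls_Delta(P) >= w_{h_3}(P). -/
import Mathlib


open scoped BigOperators

/-- Width of a set `P ⊆ ℝ^d` in direction `h`. -/
noncomputable def width {d : ℕ} (P : Set (Fin d → ℝ)) (h : Fin d → ℝ) : ℝ :=
  sSup ((fun x => ∑ i, h i * x i) '' P) - sInf ((fun x => ∑ i, h i * x i) '' P)

/-- Cast an integer vector to a real vector. -/
def zcast {d : ℕ} (h : Fin d → ℤ) : Fin d → ℝ := fun i => (h i : ℝ)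

/-- A lattice polytope: the convex hull of a nonempty finite set of integer points. -/
def IsLatticePolytope {d : ℕ} (P : Set (Fin d → ℝ)) : Prop :=
  ∃ V : Finset (Fin d → ℝ), V.Nonempty ∧ (∀ v ∈ V, ∀ i, ∃ n : ℤ, v i = (n : ℝ)) ∧
    P = convexHull ℝ (V : Set (Fin d → ℝ))

/-- `l₁` of a subset of `ℝ³`. -/
noncomputable def lone3 (P : Set (Fin 3 → ℝ)) : ℝ :=
  sSup ((fun x => x 0 + x 1 + x 2) '' P) - sInf ((fun x => x 0) '' P) -
    sInf ((fun x => x 1) '' P) - sInf ((fun x => x 2) '' P)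

/-- `l₁` of a subset of `ℝ²`. -/
noncomputable def lone2 (P : Set (Fin 2 → ℝ)) : ℝ :=
  sSup ((fun x => x 0 + x 1) '' P) - sInf ((fun x => x 0) '' P) - sInf ((fun x => x 1) '' P)

/-- Lattice size of a subset of `ℝ³` with respect to the standard simplex. -/
noncomputable def lsDelta3 (P : Set (Fin 3 → ℝ)) : ℝ :=
  sInf {r : ℝ | ∃ A : Matrix (Fin 3) (Fin 3) ℤ, IsUnit A.det ∧ ∃ v : Fin 3 → ℤ,
    r = lone3 ((fun x => Matrix.mulVec (A.map (Int.cast : ℤ → ℝ)) x + zcast v) '' P)}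

/-- Lattice size of a subset of `ℝ²` with respect to the standard simplex. -/
noncomputable def lsDelta2 (P : Set (Fin 2 → ℝ)) : ℝ :=
  sInf {r : ℝ | ∃ A : Matrix (Fin 2) (Fin 2) ℤ, IsUnit A.det ∧ ∃ v : Fin 2 → ℤ,
    r = lone2 ((fun x => Matrix.mulVec (A.map (Int.cast : ℤ → ℝ)) x + zcast v) '' P)}


private lemma width_cont_lin {d : ℕ} (c : Fin d → ℝ) :
    Continuous (fun x : Fin d → ℝ => ∑ i, c i * x i) :=
  continuous_finset_sum _ fun i _ => (continuous_const.mul (continuous_apply i))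

private lemma width_exists_row_not_span (A : Matrix (Fin 3) (Fin 3) ℤ) (hA : IsUnit A.det)
    (h1 h2 h3 : Fin 3 → ℤ) :
    ∃ i : Fin 3, ¬ ∃ m n : ℤ, (fun j => A i j) = m • h1 + n • h2 := by
  by_contra hcon
  push_neg at hcon
  choose m n hmn using fun i => hcon i
  set C : Matrix (Fin 3) (Fin 3) ℤ := Matrix.of (fun i => ![m i, n i, 0]) with hC
  set H : Matrix (Fin 3) (Fin 3) ℤ := Matrix.of ![h1, h2, h3] with hH
  have hAeq : A = C * H := by
    ext i j
    rw [Matrix.mul_apply, Fin.sum_univ_three]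
    have := congrFun (hmn i) j
    simp only [Pi.add_apply, Pi.smul_apply, smul_eq_mul] at this
    simp [hC, hH, this, Matrix.of_apply]
  have hdet : A.det = C.det * H.det := by rw [hAeq, Matrix.det_mul]
  have hCdet : C.det = 0 := by
    apply Matrix.det_eq_zero_of_column_eq_zero 2
    intro i
    simp [hC]
  rw [hdet, hCdet, zero_mul] at hA
  simp at hA

private lemma coord_diff_le_lone3 (Q : Set (Fin 3 → ℝ)) (hQ : IsCompact Q) {p q : Fin 3 → ℝ}
    (hp : p ∈ Q) (hq : q ∈ Q) (i : Fin 3) : p i - q i ≤ lone3 Q := by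
  have hbA : BddAbove ((fun x : Fin 3 → ℝ => x 0 + x 1 + x 2) '' Q) :=
    hQ.bddAbove_image (((continuous_apply 0).add (continuous_apply 1)).add
      (continuous_apply 2)).continuousOn
  have hsum : p 0 + p 1 + p 2 ≤ sSup ((fun x : Fin 3 → ℝ => x 0 + x 1 + x 2) '' Q) :=
    le_csSup hbA ⟨p, hp, rfl⟩
  have hinf : ∀ j : Fin 3, ∀ x ∈ Q, sInf ((fun y : Fin 3 → ℝ => y j) '' Q) ≤ x j := by
    intro j x hx
    exact csInf_le (hQ.bddBelow_image (continuous_apply j).continuousOn) ⟨x, hx, rfl⟩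
  have i0p := hinf 0 p hp; have i1p := hinf 1 p hp; have i2p := hinf 2 p hp
  have i0q := hinf 0 q hq; have i1q := hinf 1 q hq; have i2q := hinf 2 q hq
  unfold lone3
  fin_cases i <;>
    first
      | (change p 0 - q 0 ≤ _; linarith)
      | (change p 1 - q 1 ≤ _; linarith)
      | (change p 2 - q 2 ≤ _; linarith)

theorem lsDelta3_ge_minkowski_reduced (P : Set (Fin 3 → ℝ)) (hne : P.Nonempty)
    (hc : IsCompact P) (hconv : Convex ℝ P) (h1 h2 h3 : Fin 3 → ℤ)
    (hbasis : IsUnit (Matrix.of ![h1, h2, h3]).det)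
    (c1 : ∀ h : Fin 3 → ℤ, h ≠ 0 → width P (zcast h1) ≤ width P (zcast h))
    (c2 : ∀ h : Fin 3 → ℤ, (¬ ∃ k : ℤ, h = k • h1) → width P (zcast h2) ≤ width P (zcast h))
    (c3 : ∀ h : Fin 3 → ℤ, (¬ ∃ m n : ℤ, h = m • h1 + n • h2) →
      width P (zcast h3) ≤ width P (zcast h)) :
    width P (zcast h3) ≤ lsDelta3 P := by
  rw [lsDelta3]
  apply le_csInf
  · exact ⟨_, 1, by simp, 0, rfl⟩
  rintro r ⟨A, hA, v, rfl⟩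
  set M := A.map (Int.cast : ℤ → ℝ) with hM
  set T := fun x : Fin 3 → ℝ => M.mulVec x + zcast v with hT
  have hTcont : Continuous T := by
    apply continuous_pi
    intro i
    simp only [hT, Matrix.mulVec, dotProduct, Pi.add_apply]
    exact (width_cont_lin _).add continuous_const
  have hQc : IsCompact (T '' P) := hc.image hTcont
  obtain ⟨i, hi⟩ := width_exists_row_not_span A hA h1 h2 h3
  set g : Fin 3 → ℤ := fun j => A i j with hg
  have hkey := c3 g hi
  set f : (Fin 3 → ℝ) → ℝ := fun x => ∑ j, (zcast g) j * x j with hf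
  obtain ⟨p, hpP, hpmax⟩ := hc.exists_isMaxOn hne (width_cont_lin (zcast g)).continuousOn
  obtain ⟨q, hqP, hqmin⟩ := hc.exists_isMinOn hne (width_cont_lin (zcast g)).continuousOn
  have hsup : sSup (f '' P) = f p :=
    IsGreatest.csSup_eq ⟨⟨p, hpP, rfl⟩, by rintro _ ⟨x, hx, rfl⟩; exact hpmax hx⟩
  have hinf : sInf (f '' P) = f q :=
    IsLeast.csInf_eq ⟨⟨q, hqP, rfl⟩, by rintro _ ⟨x, hx, rfl⟩; exact hqmin hx⟩
  have hwg : width P (zcast g) = f p - f q := by rw [width, hsup, hinf]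
  have hcoord : ∀ x : Fin 3 → ℝ, T x i = f x + (v i : ℝ) := by
    intro x
    simp only [hT, Pi.add_apply, Matrix.mulVec, dotProduct, hf, hM, zcast,
      Matrix.map_apply, hg]
  calc width P (zcast h3) ≤ width P (zcast g) := hkey
    _ = T p i - T q i := by rw [hwg, hcoord, hcoord]; ring
    _ ≤ lone3 (T '' P) := coord_diff_le_lone3 _ hQc (Set.mem_image_of_mem T hpP)
        (Set.mem_image_of_mem T hqP) i
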